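/- Let G be a TLG on {1,…,N} (N ≥ 3) in which vertex 1 is adjacent exactly to vertices 2 and 3 and (2,3) ∈ E, let (f_ij) ∈ 𝓕^{|E|}, and let p be an equilibrium line configuration of the RMA system on the a-axis. Then the sub-configuration p* = (x_2,…,x_N) is an equilibrium line configuration of the reduced system associated with p. -/

import Mathlib

open Set Filter Topology MeasureTheory Matrix Function

attribute [local instance] Classical.propDecidable

noncomputable section

/-- `f̃(d) = d * f(d)`. -/
def tildeFn (f : ℝ → ℝ) : ℝ → ℝ := fun d => d * f d

/-- Membership in the class `𝓕` of monotone interaction laws: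
`f` is `C¹` on `ℝ₊ = (0,∞)`, `f̃′ > 0` on `ℝ₊`, `f̃` has a zero, and
`∫_d^1 f̃(x) dx → −∞` as `d → 0⁺`. -/
def MemF (f : ℝ → ℝ) : Prop :=
  ContDiffOn ℝ 1 f (Set.Ioi 0) ∧
  (∀ d > (0:ℝ), 0 < deriv (tildeFn f) d) ∧
  (∃ d > (0:ℝ), tildeFn f d = 0) ∧
  Tendsto (fun d => ∫ x in d..(1:ℝ), tildeFn f x) (𝓝[>] (0:ℝ)) atBot

/-- The space `C¹(ℝ₊, ℝ)`. -/
def C1Pos : Type := {f : ℝ → ℝ // ContDiffOn ℝ 1 f (Set.Ioi 0)}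

/-- The Whitney `C¹`-topology on `C¹(ℝ₊, ℝ)`, generated by the basic open sets
`B_δ(f) = {g : |g(d) − f(d)| + |g′(d) − f′(d)| < δ(d) for all d > 0}`. -/
instance : TopologicalSpace C1Pos :=
  TopologicalSpace.generateFrom
    { S | ∃ (f : C1Pos) (δ : ℝ → ℝ), ContinuousOn δ (Set.Ioi 0) ∧ (∀ d > (0:ℝ), 0 < δ d) ∧
        S = { g : C1Pos | ∀ d > (0:ℝ), |g.1 d - f.1 d| + |deriv g.1 d - deriv f.1 d| < δ d } }

/-- The class `𝓕` as a topological space (subspace of `C¹(ℝ₊,ℝ)`). -/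
def FF : Type := {f : C1Pos // MemF f.1}

instance : TopologicalSpace FF := instTopologicalSpaceSubtype

/-- `G` is a triangulated Laman graph: there is a Henneberg-type construction order
(a relabeling `σ`) starting from the edge between the first two vertices, in which every
later vertex is joined to exactly two earlier, adjacent, vertices. -/
def IsTLG {N : ℕ} (G : SimpleGraph (Fin N)) : Prop :=
  2 ≤ N ∧
  ∃ (σ : Equiv.Perm (Fin N)) (par₁ par₂ : Fin N → Fin N),
    (∀ k : Fin N, 2 ≤ (k : ℕ) →
      ((par₁ k : ℕ) < (k : ℕ) ∧ (par₂ k : ℕ) < (k : ℕ) ∧ par₁ k ≠ par₂ k ∧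
        G.Adj (σ (par₁ k)) (σ (par₂ k)))) ∧
    (∀ i j : Fin N, G.Adj (σ i) (σ j) ↔
      (((i : ℕ) = 0 ∧ (j : ℕ) = 1) ∨ ((i : ℕ) = 1 ∧ (j : ℕ) = 0) ∨
       (2 ≤ (i : ℕ) ∧ (j = par₁ i ∨ j = par₂ i)) ∨
       (2 ≤ (j : ℕ) ∧ (i = par₁ j ∨ i = par₂ j))))

/-- Euclidean distance on `ℝ²` (coordinates `(a,b)`). -/
def dist2 (x y : ℝ × ℝ) : ℝ := Real.sqrt ((x.1 - y.1)^2 + (x.2 - y.2)^2)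

/-- `p` belongs to the configuration space `P`: no collision of adjacent agents. -/
def InConfigSpace {N : ℕ} (G : SimpleGraph (Fin N)) (p : Fin N → ℝ × ℝ) : Prop :=
  ∀ i j, G.Adj i j → p i ≠ p j

/-- `p` is an equilibrium of the RMA system `ẋᵢ = Σ_{j : (i,j) ∈ E} f_ij(d_ij)(x_j − x_i)`. -/
def IsEquilibrium {N : ℕ} (G : SimpleGraph (Fin N)) (f : Fin N → Fin N → ℝ → ℝ)
    (p : Fin N → ℝ × ℝ) : Prop :=
  ∀ i, (∑ j, if G.Adj i j then (f i j (dist2 (p i) (p j))) • (p j - p i) else (0:ℝ×ℝ)) = 0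

/-- The potential function `Φ(p) = Σ_{(i,j) ∈ E} ∫_1^{d_ij} x f_ij(x) dx`
(each edge counted once; the factor 1/2 compensates the double count over ordered pairs). -/
def potential {N : ℕ} (G : SimpleGraph (Fin N)) (f : Fin N → Fin N → ℝ → ℝ)
    (p : Fin N → ℝ × ℝ) : ℝ :=
  (1/2) * ∑ i, ∑ j, if G.Adj i j then ∫ x in (1:ℝ)..(dist2 (p i) (p j)), x * f i j x else 0

/-- Coordinate directions on the configuration space, in the order `(a₁,…,a_N,b₁,…,b_N)`. -/
def basisVec {N : ℕ} : (Fin N ⊕ Fin N) → (Fin N → ℝ × ℝ) :=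
  Sum.elim (fun i => Pi.single i ((1:ℝ), (0:ℝ))) (fun i => Pi.single i ((0:ℝ), (1:ℝ)))

/-- The Hessian matrix of `Φ` at `p` in the coordinates `(a₁,…,a_N,b₁,…,b_N)`. -/
def hessian {N : ℕ} (Φ : (Fin N → ℝ × ℝ) → ℝ) (p : Fin N → ℝ × ℝ) :
    Matrix (Fin N ⊕ Fin N) (Fin N ⊕ Fin N) ℝ :=
  Matrix.of fun u v => fderiv ℝ (fun q => fderiv ℝ Φ q (basisVec v)) p (basisVec u)

/-- The inertia `𝐧(M) = (n₊(M), n₀(M), n₋(M))` of a real symmetric matrix: the numbers of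
positive, zero, and negative eigenvalues (counted with multiplicity). -/
def inertia {m : Type*} [Fintype m] [DecidableEq m] (M : Matrix m m ℝ) : ℕ × ℕ × ℕ :=
  if h : M.IsHermitian then
    ((Finset.univ.filter fun i => 0 < h.eigenvalues i).card,
     (Finset.univ.filter fun i => h.eigenvalues i = 0).card,
     (Finset.univ.filter fun i => h.eigenvalues i < 0).card)
  else (0, 0, 0)

/-- The number `n₀(M)` of zero eigenvalues of a real symmetric matrix. -/
def n0 {m : Type*} [Fintype m] [DecidableEq m] (M : Matrix m m ℝ) : ℕ := (inertia M).2.1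

/-- The vector-valued sign function. -/
def sgn3 (x : ℝ) : ℕ × ℕ × ℕ :=
  if 0 < x then (1,0,0) else if x = 0 then (0,1,0) else (0,0,1)

/-- `q` lies in the `SE(2)`-orbit of `p` (rigid motions: rotation by `(c,s)` with
`c² + s² = 1` followed by translation by `(vx,vy)`). -/
def sameOrbit {N : ℕ} (p q : Fin N → ℝ × ℝ) : Prop :=
  ∃ c s vx vy : ℝ, c^2 + s^2 = 1 ∧
    ∀ i, q i = (c * (p i).1 - s * (p i).2 + vx, s * (p i).1 + c * (p i).2 + vy)

/-- The interaction laws determined by an ensemble `ω ∈ 𝓕^{|E|}`. -/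
def ensembleLaws {N : ℕ} {G : SimpleGraph (Fin N)} (ω : G.edgeSet → FF) :
    Fin N → Fin N → ℝ → ℝ :=
  fun i j => if h : G.Adj i j then (ω ⟨s(i,j), G.mem_edgeSet.mpr h⟩).1.1 else 0

/-- The line configuration on the `a`-axis with coordinates `a`. -/
def lineConfig {N : ℕ} (a : Fin N → ℝ) : Fin N → ℝ × ℝ := fun i => (a i, 0)

/-- The matrix `F_p` of a line configuration with coordinates `a`: symmetric, zero row sums,
off-diagonal entries `φ_ij(d_ij)` on edges and `0` otherwise. -/
def FMat {N : ℕ} (G : SimpleGraph (Fin N)) (φ : Fin N → Fin N → ℝ → ℝ)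
    (a : Fin N → ℝ) : Matrix (Fin N) (Fin N) ℝ :=
  Matrix.of fun i j =>
    if i = j then -∑ k, (if G.Adj i k then φ i k |a i - a k| else 0)
    else if G.Adj i j then φ i j |a i - a j| else 0

/-- The matrix `d̃F_p`: off-diagonal entries `f̃′_ij(d_ij)` on edges. -/
def dFMat {N : ℕ} (G : SimpleGraph (Fin N)) (f : Fin N → Fin N → ℝ → ℝ)
    (a : Fin N → ℝ) : Matrix (Fin N) (Fin N) ℝ :=
  FMat G (fun i j d => deriv (tildeFn (f i j)) d) a

/-- Case 1 balanced distance: the (generically unique) `d₁₂(d)` with `0 < d₁₂ < d` and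
`f̃₁₂(d₁₂) = f̃₁₃(d − d₁₂)`. -/
def case1d12 (f12 f13 : ℝ → ℝ) (d : ℝ) : ℝ :=
  Classical.epsilon fun t => 0 < t ∧ t < d ∧ tildeFn f12 t = tildeFn f13 (d - t)

/-- The case-1 virtual interaction: `g̃₂₃(d) = f̃₁₂(d₁₂(d))`. -/
def g23Case1 (f12 f13 : ℝ → ℝ) : ℝ → ℝ :=
  fun d => tildeFn f12 (case1d12 f12 f13 d) / d

/-- Case 2 balanced distance: the (generically unique) `d₁₂(d) > 0` with
`f̃₁₂(d₁₂) + f̃₁₃(d₁₂ + d) = 0`. -/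
def case2d12 (f12 f13 : ℝ → ℝ) (d : ℝ) : ℝ :=
  Classical.epsilon fun t => 0 < t ∧ tildeFn f12 t + tildeFn f13 (t + d) = 0

/-- The case-2 virtual interaction: `g̃₂₃(d) = f̃₁₃(d₁₃(d))`, `d₁₃(d) = d₁₂(d) + d`. -/
def g23Case2 (f12 f13 : ℝ → ℝ) : ℝ → ℝ :=
  fun d => tildeFn f13 (case2d12 f12 f13 d + d) / d

/-- The case-3 virtual interaction: case 2 with the roles of agents 2,3 (and `f₁₂`,`f₁₃`)
interchanged. -/
def g23Case3 (f12 f13 : ℝ → ℝ) : ℝ → ℝ := g23Case2 f13 f12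

/-- The virtual interaction between agents 2 and 3 induced by `f₁₂`, `f₁₃`, chosen according
to which of the three aligned agents (at coordinates `a1`, `a2`, `a3`) lies between the
other two. -/
def virtualG (f12 f13 : ℝ → ℝ) (a1 a2 a3 : ℝ) : ℝ → ℝ :=
  if (a2 < a1 ∧ a1 < a3) ∨ (a3 < a1 ∧ a1 < a2) then g23Case1 f12 f13
  else if (a1 < a2 ∧ a2 < a3) ∨ (a3 < a2 ∧ a2 < a1) then g23Case2 f12 f13
  else g23Case3 f12 f13

/-- The interaction laws of the reduced system: vertex `0` (the last Henneberg vertex,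
the paper's vertex 1) is deleted, reduced vertex `i` is original vertex `i+1`, and the law on
the reduced edge `(0,1)` (the paper's edge `(2,3)`) is `f*₂₃ = f₂₃ + g₂₃`. -/
def reducedLaws {n : ℕ} (f : Fin (n+3) → Fin (n+3) → ℝ → ℝ) (g : ℝ → ℝ) :
    Fin (n+2) → Fin (n+2) → ℝ → ℝ :=
  fun i j => if (i = 0 ∧ j = 1) ∨ (i = 1 ∧ j = 0)
    then fun d => f i.succ j.succ d + g d
    else f i.succ j.succ

end


section Helpers

lemma memF_strictMonoOn {f : ℝ → ℝ} (hf : MemF f) :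
    StrictMonoOn (tildeFn f) (Set.Ioi 0) := by
  have hc : ContinuousOn (tildeFn f) (Set.Ioi 0) :=
    continuousOn_id.mul hf.1.continuousOn
  apply strictMonoOn_of_deriv_pos (convex_Ioi 0) hc
  intro x hx
  rw [interior_Ioi] at hx
  exact hf.2.1 x hx

lemma case1d12_eq {f12 f13 : ℝ → ℝ} (h12 : MemF f12) (h13 : MemF f13)
    {d t : ℝ} (ht0 : 0 < t) (htd : t < d)
    (hbal : tildeFn f12 t = tildeFn f13 (d - t)) :
    case1d12 f12 f13 d = t := by
  have m12 := memF_strictMonoOn h12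
  have m13 := memF_strictMonoOn h13
  have hex : ∃ s, 0 < s ∧ s < d ∧ tildeFn f12 s = tildeFn f13 (d - s) :=
    ⟨t, ht0, htd, hbal⟩
  have hspec := Classical.epsilon_spec hex
  set s := Classical.epsilon fun s => 0 < s ∧ s < d ∧ tildeFn f12 s = tildeFn f13 (d - s)
    with hsdef
  obtain ⟨hs0, hsd, hsbal⟩ := hspec
  have hcs : case1d12 f12 f13 d = s := rfl
  rw [hcs]
  rcases lt_trichotomy s t with h | h | h
  · exfalso
    have h1 := m12 (Set.mem_Ioi.mpr hs0) (Set.mem_Ioi.mpr ht0) h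
    have h2 := m13 (Set.mem_Ioi.mpr (by linarith : (0:ℝ) < d - t))
      (Set.mem_Ioi.mpr (by linarith : (0:ℝ) < d - s)) (by linarith)
    linarith
  · exact h
  · exfalso
    have h1 := m12 (Set.mem_Ioi.mpr ht0) (Set.mem_Ioi.mpr hs0) h
    have h2 := m13 (Set.mem_Ioi.mpr (by linarith : (0:ℝ) < d - s))
      (Set.mem_Ioi.mpr (by linarith : (0:ℝ) < d - t)) (by linarith)
    linarith

lemma case2d12_eq {f12 f13 : ℝ → ℝ} (h12 : MemF f12) (h13 : MemF f13)
    {d t : ℝ} (hd : 0 < d) (ht0 : 0 < t)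
    (hbal : tildeFn f12 t + tildeFn f13 (t + d) = 0) :
    case2d12 f12 f13 d = t := by
  have m12 := memF_strictMonoOn h12
  have m13 := memF_strictMonoOn h13
  have hex : ∃ s, 0 < s ∧ tildeFn f12 s + tildeFn f13 (s + d) = 0 := ⟨t, ht0, hbal⟩
  have hspec := Classical.epsilon_spec hex
  set s := Classical.epsilon fun s => 0 < s ∧ tildeFn f12 s + tildeFn f13 (s + d) = 0
    with hsdef
  obtain ⟨hs0, hsbal⟩ := hspec
  have hcs : case2d12 f12 f13 d = s := rfl
  rw [hcs]
  rcases lt_trichotomy s t with h | h | h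
  · exfalso
    have h1 := m12 (Set.mem_Ioi.mpr hs0) (Set.mem_Ioi.mpr ht0) h
    have h2 := m13 (Set.mem_Ioi.mpr (by linarith : (0:ℝ) < s + d))
      (Set.mem_Ioi.mpr (by linarith : (0:ℝ) < t + d)) (by linarith)
    linarith
  · exact h
  · exfalso
    have h1 := m12 (Set.mem_Ioi.mpr ht0) (Set.mem_Ioi.mpr hs0) h
    have h2 := m13 (Set.mem_Ioi.mpr (by linarith : (0:ℝ) < t + d))
      (Set.mem_Ioi.mpr (by linarith : (0:ℝ) < s + d)) (by linarith)
    linarith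

lemma virtual_force {f12 f13 : ℝ → ℝ} (hm12 : MemF f12) (hm13 : MemF f13)
    {a0 a1 a2 : ℝ} (h01 : a0 ≠ a1) (h02 : a0 ≠ a2) (h12' : a1 ≠ a2)
    (heq : f12 (|a0 - a1|) * (a1 - a0) + f13 (|a0 - a2|) * (a2 - a0) = 0) :
    virtualG f12 f13 a0 a1 a2 (|a1 - a2|) * (a2 - a1)
      = f12 (|a0 - a1|) * (a0 - a1) := by
  rcases lt_or_gt_of_ne h01 with hx1 | hx1 <;>
  rcases lt_or_gt_of_ne h02 with hx2 | hx2 <;>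
  rcases lt_or_gt_of_ne h12' with hx3 | hx3
  · -- a0 < a1 < a2 : case 2
    have hd  : |a1 - a2| = a2 - a1 := by rw [abs_sub_comm, abs_of_pos (by linarith)]
    have hb1 : |a0 - a1| = a1 - a0 := by rw [abs_sub_comm, abs_of_pos (by linarith)]
    have hb2 : |a0 - a2| = a2 - a0 := by rw [abs_sub_comm, abs_of_pos (by linarith)]
    rw [hb1, hb2] at heq
    rw [hd, hb1, virtualG, if_neg (by rintro (⟨u,v⟩|⟨u,v⟩) <;> linarith),
      if_pos (Or.inl ⟨hx1, hx3⟩)]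
    have hbal : tildeFn f12 (a1 - a0) + tildeFn f13 ((a1 - a0) + (a2 - a1)) = 0 := by
      have harg : a1 - a0 + (a2 - a1) = a2 - a0 := by ring
      rw [harg]; simp only [tildeFn]; linear_combination heq
    have hc := case2d12_eq hm12 hm13 (by linarith : (0:ℝ) < a2 - a1)
      (by linarith : (0:ℝ) < a1 - a0) hbal
    rw [g23Case2, hc, div_mul_cancel₀ _ (by linarith : a2 - a1 ≠ 0)]
    have harg : a1 - a0 + (a2 - a1) = a2 - a0 := by ring
    rw [harg]; simp only [tildeFn]; linear_combination heq
  · -- a0 < a2 < a1 : case 3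
    have hd  : |a1 - a2| = a1 - a2 := abs_of_pos (by linarith)
    have hb1 : |a0 - a1| = a1 - a0 := by rw [abs_sub_comm, abs_of_pos (by linarith)]
    have hb2 : |a0 - a2| = a2 - a0 := by rw [abs_sub_comm, abs_of_pos (by linarith)]
    rw [hb1, hb2] at heq
    rw [hd, hb1, virtualG, if_neg (by rintro (⟨u,v⟩|⟨u,v⟩) <;> linarith),
      if_neg (by rintro (⟨u,v⟩|⟨u,v⟩) <;> linarith)]
    have hbal : tildeFn f13 (a2 - a0) + tildeFn f12 ((a2 - a0) + (a1 - a2)) = 0 := by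
      have harg : a2 - a0 + (a1 - a2) = a1 - a0 := by ring
      rw [harg]; simp only [tildeFn]; linear_combination heq
    have hc := case2d12_eq hm13 hm12 (by linarith : (0:ℝ) < a1 - a2)
      (by linarith : (0:ℝ) < a2 - a0) hbal
    rw [g23Case3, g23Case2, hc]
    have harg : a2 - a0 + (a1 - a2) = a1 - a0 := by ring
    rw [harg]
    have hne : a1 - a2 ≠ 0 := by linarith
    field_simp [tildeFn]
    simp only [tildeFn]
    ring
  · -- a2 < a0 < a1 ∧ a1 < a2 : impossible
    exact absurd (by linarith : a2 < a2) (lt_irrefl a2)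
  · -- a2 < a0 < a1 : case 1 (second disjunct)
    have hd  : |a1 - a2| = a1 - a2 := abs_of_pos (by linarith)
    have hb1 : |a0 - a1| = a1 - a0 := by rw [abs_sub_comm, abs_of_pos (by linarith)]
    have hb2 : |a0 - a2| = a0 - a2 := abs_of_pos (by linarith)
    rw [hb1, hb2] at heq
    rw [hd, hb1, virtualG, if_pos (Or.inr ⟨hx2, hx1⟩)]
    have hbal : tildeFn f12 (a1 - a0) = tildeFn f13 ((a1 - a2) - (a1 - a0)) := by
      have harg : (a1 - a2) - (a1 - a0) = a0 - a2 := by ring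
      rw [harg]; simp only [tildeFn]; linear_combination heq
    have hc := case1d12_eq hm12 hm13 (by linarith : (0:ℝ) < a1 - a0)
      (by linarith : a1 - a0 < a1 - a2) hbal
    rw [g23Case1, hc]
    have hne : a1 - a2 ≠ 0 := by linarith
    field_simp [tildeFn]
    simp only [tildeFn]
    ring
  · -- a1 < a0 < a2 : case 1
    have hd  : |a1 - a2| = a2 - a1 := by rw [abs_sub_comm, abs_of_pos (by linarith)]
    have hb1 : |a0 - a1| = a0 - a1 := abs_of_pos (by linarith)
    have hb2 : |a0 - a2| = a2 - a0 := by rw [abs_sub_comm, abs_of_pos (by linarith)]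
    rw [hb1, hb2] at heq
    rw [hd, hb1, virtualG, if_pos (Or.inl ⟨hx1, hx2⟩)]
    have hbal : tildeFn f12 (a0 - a1) = tildeFn f13 ((a2 - a1) - (a0 - a1)) := by
      have harg : (a2 - a1) - (a0 - a1) = a2 - a0 := by ring
      rw [harg]; simp only [tildeFn]; linear_combination -heq
    have hc := case1d12_eq hm12 hm13 (by linarith : (0:ℝ) < a0 - a1)
      (by linarith : a0 - a1 < a2 - a1) hbal
    rw [g23Case1, hc, div_mul_cancel₀ _ (by linarith : a2 - a1 ≠ 0)]
    simp only [tildeFn]; ring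
  · -- a1 < a0, a0 < a2, a2 < a1 : impossible
    exact absurd (by linarith : a1 < a1) (lt_irrefl a1)
  · -- a1 < a2 < a0 : case 3
    have hd  : |a1 - a2| = a2 - a1 := by rw [abs_sub_comm, abs_of_pos (by linarith)]
    have hb1 : |a0 - a1| = a0 - a1 := abs_of_pos (by linarith)
    have hb2 : |a0 - a2| = a0 - a2 := abs_of_pos (by linarith)
    rw [hb1, hb2] at heq
    rw [hd, hb1, virtualG, if_neg (by rintro (⟨u,v⟩|⟨u,v⟩) <;> linarith),
      if_neg (by rintro (⟨u,v⟩|⟨u,v⟩) <;> linarith)]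
    have hbal : tildeFn f13 (a0 - a2) + tildeFn f12 ((a0 - a2) + (a2 - a1)) = 0 := by
      have harg : a0 - a2 + (a2 - a1) = a0 - a1 := by ring
      rw [harg]; simp only [tildeFn]; linear_combination -heq
    have hc := case2d12_eq hm13 hm12 (by linarith : (0:ℝ) < a2 - a1)
      (by linarith : (0:ℝ) < a0 - a2) hbal
    rw [g23Case3, g23Case2, hc, div_mul_cancel₀ _ (by linarith : a2 - a1 ≠ 0)]
    have harg : a0 - a2 + (a2 - a1) = a0 - a1 := by ring
    rw [harg]; simp only [tildeFn]; ring
  · -- a2 < a1 < a0 : case 2 (second disjunct)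
    have hd  : |a1 - a2| = a1 - a2 := abs_of_pos (by linarith)
    have hb1 : |a0 - a1| = a0 - a1 := abs_of_pos (by linarith)
    have hb2 : |a0 - a2| = a0 - a2 := abs_of_pos (by linarith)
    rw [hb1, hb2] at heq
    rw [hd, hb1, virtualG, if_neg (by rintro (⟨u,v⟩|⟨u,v⟩) <;> linarith),
      if_pos (Or.inr ⟨hx3, hx1⟩)]
    have hbal : tildeFn f12 (a0 - a1) + tildeFn f13 ((a0 - a1) + (a1 - a2)) = 0 := by
      have harg : a0 - a1 + (a1 - a2) = a0 - a2 := by ring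
      rw [harg]; simp only [tildeFn]; linear_combination -heq
    have hc := case2d12_eq hm12 hm13 (by linarith : (0:ℝ) < a1 - a2)
      (by linarith : (0:ℝ) < a0 - a1) hbal
    rw [g23Case2, hc]
    have harg : a0 - a1 + (a1 - a2) = a0 - a2 := by ring
    rw [harg]
    have hne : a1 - a2 ≠ 0 := by linarith
    have h5 : (a2 - a1) = -(a1 - a2) := by ring
    rw [h5, mul_neg, div_mul_cancel₀ _ hne]
    simp only [tildeFn]; linear_combination heq

lemma dist2_line (x y : ℝ) : dist2 (x, 0) (y, 0) = |x - y| := by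
  simp [dist2, Real.sqrt_sq_eq_abs]

lemma line_eq_fst {N : ℕ} (G : SimpleGraph (Fin N)) (f : Fin N → Fin N → ℝ → ℝ)
    (a : Fin N → ℝ) (h : IsEquilibrium G f (lineConfig a)) (i : Fin N) :
    ∑ j, (if G.Adj i j then f i j (|a i - a j|) * (a j - a i) else 0) = 0 := by
  have h1 := congrArg Prod.fst (h i)
  simpa [lineConfig, dist2_line, Prod.fst_sum, apply_ite Prod.fst, Prod.smul_fst,
    smul_eq_mul, Prod.fst_sub] using h1

lemma line_equilibrium_of_fst {N : ℕ} (G : SimpleGraph (Fin N)) (f : Fin N → Fin N → ℝ → ℝ)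
    (a : Fin N → ℝ)
    (h : ∀ i, ∑ j, (if G.Adj i j then f i j (|a i - a j|) * (a j - a i) else 0) = 0) :
    IsEquilibrium G f (lineConfig a) := by
  intro i
  have h2 : (∑ j, if G.Adj i j then
      (f i j (dist2 (lineConfig a i) (lineConfig a j))) • (lineConfig a j - lineConfig a i)
      else (0:ℝ×ℝ))
      = ((∑ j, (if G.Adj i j then f i j (|a i - a j|) * (a j - a i) else 0)),
         (∑ _j : Fin N, (0:ℝ))) := by
    rw [Prod.ext_iff]
    constructor
    · simp [lineConfig, dist2_line, Prod.fst_sum, apply_ite Prod.fst, Prod.smul_fst,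
        smul_eq_mul, Prod.fst_sub]
    · simp [lineConfig, dist2_line, Prod.snd_sum, apply_ite Prod.snd, Prod.smul_snd,
        smul_eq_mul, Prod.snd_sub]
  rw [h2, h i]
  simp [Prod.ext_iff]

end Helpers

/-- if `p` is an equilibrium line configuration on the `a`-axis of the RMA
system on a TLG whose last Henneberg vertex (index `0`, the paper's vertex 1) is adjacent
exactly to vertices `1` and `2` (the paper's 2 and 3), which are themselves adjacent, then
the sub-configuration `p* = (x₂,…,x_N)` is an equilibrium line configuration of the reduced
system associated with `p`. -/
theorem statement1 {n : ℕ} (G : SimpleGraph (Fin (n+3))) (hG : IsTLG G)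
    (h0 : G.neighborSet 0 = {1, 2}) (h12 : G.Adj 1 2)
    (f : Fin (n+3) → Fin (n+3) → ℝ → ℝ)
    (hsym : ∀ i j, f i j = f j i)
    (hF : ∀ i j, G.Adj i j → MemF (f i j))
    (a : Fin (n+3) → ℝ)
    (hP : ∀ i j, G.Adj i j → a i ≠ a j)
    (heq : IsEquilibrium G f (lineConfig a)) :
    InConfigSpace (G.comap Fin.succ) (lineConfig (a ∘ Fin.succ)) ∧
    IsEquilibrium (G.comap Fin.succ)
      (reducedLaws f (virtualG (f 0 1) (f 0 2) (a 0) (a 1) (a 2)))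
      (lineConfig (a ∘ Fin.succ)) := by
  clear hG
  have hadj0 : ∀ j, G.Adj 0 j ↔ j = 1 ∨ j = 2 := by
    intro j
    have h := Set.ext_iff.mp h0 j
    simpa using h
  have h01 : G.Adj 0 1 := (hadj0 1).mpr (Or.inl rfl)
  have h02 : G.Adj 0 2 := (hadj0 2).mpr (Or.inr rfl)
  have ha01 : a 0 ≠ a 1 := hP 0 1 h01
  have ha02 : a 0 ≠ a 2 := hP 0 2 h02
  have ha12 : a 1 ≠ a 2 := hP 1 2 h12
  have hs0 : (0 : Fin (n+2)).succ = (1 : Fin (n+3)) := rfl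
  have hs1 : (1 : Fin (n+2)).succ = (2 : Fin (n+3)) := rfl
  have h1ne2 : (1 : Fin (n+3)) ≠ 2 := by simp [Fin.ext_iff, Nat.mod_eq_of_lt (by omega : 2 < n+3)]
  set g := virtualG (f 0 1) (f 0 2) (a 0) (a 1) (a 2) with hgdef
  -- scalar equilibrium at vertex 0
  have hE0 : f 0 1 (|a 0 - a 1|) * (a 1 - a 0) + f 0 2 (|a 0 - a 2|) * (a 2 - a 0) = 0 := by
    have hsum := line_eq_fst G f a heq 0
    have hterm : ∀ j : Fin (n+3),
        (if G.Adj 0 j then f 0 j (|a 0 - a j|) * (a j - a 0) else 0)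
        = (if j = 1 then f 0 1 (|a 0 - a 1|) * (a 1 - a 0) else 0)
          + (if j = 2 then f 0 2 (|a 0 - a 2|) * (a 2 - a 0) else 0) := by
      intro j
      by_cases hj1 : j = 1
      · subst hj1
        rw [if_pos h01, if_pos rfl, if_neg h1ne2, add_zero]
      · by_cases hj2 : j = 2
        · subst hj2
          rw [if_pos h02, if_neg hj1, if_pos rfl, zero_add]
        · rw [if_neg (fun h => by rcases (hadj0 j).mp h with h' | h' <;> [exact hj1 h'; exact hj2 h']),
            if_neg hj1, if_neg hj2, add_zero]
    rw [Finset.sum_congr rfl (fun j _ => hterm j), Finset.sum_add_distrib] at hsum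
    simpa using hsum
  have hkey : g (|a 1 - a 2|) * (a 2 - a 1) = f 0 1 (|a 0 - a 1|) * (a 0 - a 1) :=
    virtual_force (hF 0 1 h01) (hF 0 2 h02) ha01 ha02 ha12 hE0
  have hkey2 : g (|a 2 - a 1|) * (a 1 - a 2) = f 0 2 (|a 0 - a 2|) * (a 0 - a 2) := by
    rw [abs_sub_comm]
    linear_combination -hkey + hE0
  -- the scalar equations at the other vertices, split off the j = 0 term
  have hE : ∀ i : Fin (n+2),
      (if G.Adj i.succ 0 then f i.succ 0 (|a i.succ - a 0|) * (a 0 - a i.succ) else 0)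
      + ∑ j : Fin (n+2), (if G.Adj i.succ j.succ
          then f i.succ j.succ (|a i.succ - a j.succ|) * (a j.succ - a i.succ) else 0) = 0 := by
    intro i
    have h := line_eq_fst G f a heq i.succ
    rwa [Fin.sum_univ_succ] at h
  constructor
  · intro i j hij hcontra
    exact hP _ _ (SimpleGraph.comap_adj.mp hij)
      (by simpa [lineConfig] using congrArg Prod.fst hcontra)
  · apply line_equilibrium_of_fst
    intro i
    simp only [SimpleGraph.comap_adj, Function.comp_apply]
    by_cases hi0 : i = 0
    · subst hi0
      rw [hs0]
      have hterm : ∀ j : Fin (n+2),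
          (if G.Adj 1 j.succ then reducedLaws f g 0 j (|a 1 - a j.succ|) * (a j.succ - a 1) else 0)
          = (if G.Adj 1 j.succ then f 1 j.succ (|a 1 - a j.succ|) * (a j.succ - a 1) else 0)
            + (if j = 1 then g (|a 1 - a 2|) * (a 2 - a 1) else 0) := by
        intro j
        by_cases hj : j = (1 : Fin (n+2))
        · subst hj
          rw [hs1, if_pos h12, if_pos h12, if_pos rfl]
          have hrl : reducedLaws f g 0 1 = fun d => f 1 2 d + g d := by
            simp [reducedLaws, Fin.succ_zero_eq_one, Fin.succ_one_eq_two]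
          rw [hrl]
          ring
        · have hrl : reducedLaws f g 0 j = f 1 j.succ := by
            simp only [reducedLaws]
            rw [if_neg]
            · rfl
            · rintro (⟨_, h⟩|⟨h, _⟩)
              · exact hj h
              · exact absurd h (by simp)
          rw [hrl, if_neg hj, add_zero]
      rw [Finset.sum_congr rfl (fun j _ => hterm j), Finset.sum_add_distrib]
      have hplain := hE 0
      rw [hs0, if_pos (G.adj_symm h01), hsym 1 0, abs_sub_comm (a 1) (a 0)] at hplain
      simp only [Finset.sum_ite_eq', Finset.mem_univ, if_true]
      linarith [hkey]
    · by_cases hi1 : i = 1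
      · subst hi1
        rw [hs1]
        have hterm : ∀ j : Fin (n+2),
            (if G.Adj 2 j.succ then reducedLaws f g 1 j (|a 2 - a j.succ|) * (a j.succ - a 2) else 0)
            = (if G.Adj 2 j.succ then f 2 j.succ (|a 2 - a j.succ|) * (a j.succ - a 2) else 0)
              + (if j = 0 then g (|a 2 - a 1|) * (a 1 - a 2) else 0) := by
          intro j
          by_cases hj : j = (0 : Fin (n+2))
          · subst hj
            rw [hs0, if_pos (G.adj_symm h12), if_pos (G.adj_symm h12), if_pos rfl]
            have hrl : reducedLaws f g 1 0 = fun d => f 2 1 d + g d := by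
              simp [reducedLaws, Fin.succ_zero_eq_one, Fin.succ_one_eq_two]
            rw [hrl]
            ring
          · have hrl : reducedLaws f g 1 j = f 2 j.succ := by
              simp only [reducedLaws]
              rw [if_neg]
              · rfl
              · rintro (⟨h, _⟩|⟨_, h⟩)
                · exact absurd h (by simp)
                · exact hj h
            rw [hrl, if_neg hj, add_zero]
        rw [Finset.sum_congr rfl (fun j _ => hterm j), Finset.sum_add_distrib]
        have hplain := hE 1
        rw [hs1, if_pos (G.adj_symm h02), hsym 2 0, abs_sub_comm (a 2) (a 0)] at hplain
        simp only [Finset.sum_ite_eq', Finset.mem_univ, if_true]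
        linarith [hkey2]
      · have hterm : ∀ j : Fin (n+2), reducedLaws f g i j = f i.succ j.succ := by
          intro j
          simp only [reducedLaws]
          rw [if_neg]
          rintro (⟨h, _⟩|⟨h, _⟩)
          · exact hi0 h
          · exact hi1 h
        have hnadj : ¬ G.Adj i.succ 0 := by
          intro h
          rcases (hadj0 i.succ).mp (G.adj_symm h) with h' | h'
          · exact hi0 (Fin.succ_injective _ (h'.trans hs0.symm))
          · exact hi1 (Fin.succ_injective _ (h'.trans hs1.symm))
        have h := hE i
        rw [if_neg hnadj, zero_add] at h
        simpa only [hterm] using h
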